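/- Let G be a right partially ordered group (a ≤ b implies ac ≤ bc for all c) with identity e and positive cone G⁺ = {x ∈ G : x > e}. Let B be a nonempty subset of G⁺, and let J be a downward closed subset of G⁺ such that J* = J \ B is nonempty and, for all x ∈ J*, the set B*(x) = {b ∈ B : b < x} is nonempty and finite. Then there is a family {J_ℓ : ℓ ∈ L} of pairwise disjoint nonempty subsets of J* with J* = ⋃_{ℓ ∈ L} J_ℓ and, for each ℓ ∈ L, an element b_ℓ ∈ B such that J_ℓ b_ℓ^{-1} is a downward closed subset of G⁺. -/

import Mathlib

/-- A subset `S` of the positive cone `G⁺ = {x : 1 < x}` is downward closed if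
`x ∈ S` implies `(e, x) ⊆ S`. -/
def DownwardClosed {G : Type*} [Group G] [PartialOrder G] (S : Set G) : Prop :=
  S ⊆ Set.Ioi 1 ∧ ∀ x ∈ S, Set.Ioo (1 : G) x ⊆ S

/-- Partition theorem for right partially ordered groups: `J* = J \ B`
decomposes into pairwise disjoint nonempty pieces `J_ℓ`, each with a
`b_ℓ ∈ B` such that `J_ℓ b_ℓ⁻¹` is a downward closed subset of `G⁺`. -/
theorem partition_right_ordered
    {G : Type*} [Group G] [PartialOrder G]
    [CovariantClass G G (Function.swap (· * ·)) (· ≤ ·)]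
    (B J : Set G) (hBne : B.Nonempty) (hBpos : B ⊆ Set.Ioi 1)
    (hJ : DownwardClosed J) (hJstar : (J \ B).Nonempty)
    (hBx : ∀ x ∈ J \ B, (B ∩ Set.Iio x).Nonempty ∧ (B ∩ Set.Iio x).Finite) :
    ∃ (L : Set G) (Jfam : G → Set G) (b : G → G),
      (∀ ℓ ∈ L, (Jfam ℓ).Nonempty ∧ Jfam ℓ ⊆ J \ B) ∧
      (L.Pairwise fun ℓ₁ ℓ₂ => Disjoint (Jfam ℓ₁) (Jfam ℓ₂)) ∧
      (⋃ ℓ ∈ L, Jfam ℓ) = J \ B ∧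
      (∀ ℓ ∈ L, b ℓ ∈ B ∧ DownwardClosed ((fun y => y * (b ℓ)⁻¹) '' Jfam ℓ)) := by
  classical
  have mulr : ∀ {a c : G}, a < c → ∀ d : G, a * d < c * d := fun h d =>
    lt_of_le_of_ne (mul_le_mul_left h.le d) (fun he => h.ne (mul_right_cancel he))
  -- linear extension of the order on G
  let f : G →o LinearExtension G := toLinearExtension
  have finj : Function.Injective f := fun a b h => h
  have fmono : ∀ {a c : G}, a ≤ c → f a ≤ f c := fun h => f.monotone h
  have fsmono : ∀ {a c : G}, a < c → f a < f c := fun h =>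
    lt_of_le_of_ne (fmono h.le) (fun he => h.ne (finj he))
  -- for each x ∈ J \ B there is a greatest (w.r.t. f) element of B ∩ Iio x
  have key : ∀ x ∈ J \ B, ∃ m, m ∈ B ∩ Set.Iio x ∧
      ∀ a ∈ B ∩ Set.Iio x, f a ≤ f m := by
    intro x hx
    obtain ⟨hne, hfin⟩ := hBx x hx
    obtain ⟨m, hm, hmax⟩ := Set.Finite.exists_maximalFor f _ hfin hne
    refine ⟨m, hm, fun a ha => ?_⟩
    rcases le_total (f a) (f m) with h | h
    · exact h
    · exact (hmax ha h).ge
  let P : G → Prop := fun x => ∃ m, m ∈ B ∩ Set.Iio x ∧ ∀ a ∈ B ∩ Set.Iio x, f a ≤ f m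
  let bF : G → G := fun x => if h : P x then h.choose else 1
  have bF_spec : ∀ x ∈ J \ B, bF x ∈ B ∩ Set.Iio x ∧
      ∀ a ∈ B ∩ Set.Iio x, f a ≤ f (bF x) := by
    intro x hx
    have h : P x := key x hx
    simp only [bF, dif_pos h]
    exact h.choose_spec
  -- uniqueness of the greatest element
  have bF_eq : ∀ x ∈ J \ B, ∀ m, m ∈ B ∩ Set.Iio x →
      (∀ a ∈ B ∩ Set.Iio x, f a ≤ f m) → bF x = m := by
    intro x hx m hm hmax
    obtain ⟨h1, h2⟩ := bF_spec x hx
    exact finj (le_antisymm (hmax _ h1) (h2 _ hm))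
  refine ⟨bF '' (J \ B), fun ℓ => {x ∈ J \ B | bF x = ℓ}, id, ?_, ?_, ?_, ?_⟩
  · rintro ℓ ⟨x, hx, rfl⟩
    exact ⟨⟨x, hx, rfl⟩, fun y hy => hy.1⟩
  · rintro ℓ₁ - ℓ₂ - hne
    refine Set.disjoint_left.2 fun x hx₁ hx₂ => hne ?_
    rw [← hx₁.2, ← hx₂.2]
  · ext x
    simp only [Set.mem_iUnion, Set.mem_setOf_eq, Set.mem_image]
    constructor
    · rintro ⟨ℓ, -, hx, -⟩; exact hx
    · intro hx; exact ⟨bF x, ⟨x, hx, rfl⟩, hx, rfl⟩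
  · rintro ℓ ⟨x₀, hx₀, rfl⟩
    have hb := bF_spec x₀ hx₀
    refine ⟨hb.1.1, ?_, ?_⟩
    · -- image ⊆ Ioi 1
      rintro w ⟨x, ⟨hx, hbx⟩, rfl⟩
      have hlt : bF x₀ < x := hbx ▸ (bF_spec x hx).1.2
      have := mulr hlt (bF x₀)⁻¹
      simpa using this
    · rintro w ⟨x, ⟨hx, hbx⟩, rfl⟩ z hz
      set ℓ := bF x₀ with hℓ
      have hℓB : ℓ ∈ B := hb.1.1
      have hℓ1 : (1 : G) < ℓ := hBpos hℓB
      have hℓy : ℓ < z * ℓ := by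
        have := mulr hz.1 ℓ; rwa [one_mul] at this
      have hyx : z * ℓ < x := by
        have := mulr hz.2 ℓ
        simpa using this
      have hyJ : z * ℓ ∈ J := hJ.2 x hx.1 ⟨hℓ1.trans hℓy, hyx⟩
      have hyB : z * ℓ ∉ B := by
        intro hmem
        have h1 : f (z * ℓ) ≤ f (bF x) := (bF_spec x hx).2 _ ⟨hmem, hyx⟩
        rw [hbx] at h1
        exact absurd h1 (not_le.2 (fsmono hℓy))
      have hy : z * ℓ ∈ J \ B := ⟨hyJ, hyB⟩
      have hby : bF (z * ℓ) = ℓ := by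
        refine bF_eq _ hy ℓ ⟨hℓB, hℓy⟩ fun a ha => ?_
        have h1 : f a ≤ f (bF x) := (bF_spec x hx).2 a ⟨ha.1, ha.2.trans hyx⟩
        rwa [hbx] at h1
      exact ⟨z * ℓ, ⟨hy, hby⟩, by simp⟩
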